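/- For $k \ge 2$, the incidence graph $D_k(q)$ shows that $\mathrm{ex}(2q^k, C_4) \ge q^{k+1}$ in the sense that there exists a $C_4$-free graph on $2q^k$ vertices with $q^{k+1}$ edges. -/

import Mathlib

/-- The moment-curve vector `(1, z, z^2, ..., z^(k-1))` in `F^k`. -/
def mvec (k : ℕ) {F : Type} [Field F] (z : F) : Fin k → F := fun j => z ^ (j : ℕ)

/-- The moment-curve line through `x` with direction parameter `z`. -/
def mline (k : ℕ) {F : Type} [Field F] (x : Fin k → F) (z : F) : Set (Fin k → F) :=
  {p | ∃ y : F, p = x + y • mvec k z}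

/-- Incidence relation: point `p` lies on the line with parameters `l = (a, z)`. -/
def IncRel (m : ℕ) {F : Type} [Field F] (p : Fin (m+1) → F) (l : (Fin m → F) × F) : Prop :=
  ∀ j : Fin m, p j.succ = l.1 j + p 0 * l.2 ^ ((j : ℕ) + 1)

/-- The bipartite incidence graph. -/
def Gr (m : ℕ) (F : Type) [Field F] :
    SimpleGraph ((Fin (m+1) → F) ⊕ ((Fin m → F) × F)) where
  Adj u v := (∃ p l, u = .inl p ∧ v = .inr l ∧ IncRel m p l) ∨
             (∃ p l, u = .inr l ∧ v = .inl p ∧ IncRel m p l)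
  symm := by
    constructor
    rintro u v (⟨p, l, rfl, rfl, h⟩ | ⟨p, l, rfl, rfl, h⟩)
    · exact Or.inr ⟨p, l, rfl, rfl, h⟩
    · exact Or.inl ⟨p, l, rfl, rfl, h⟩
  loopless := by
    constructor
    rintro (p | l) (⟨p', l', h1, h2, _⟩ | ⟨p', l', h1, h2, _⟩) <;> simp_all

lemma rel_point_eq {m : ℕ} {F : Type} [Field F] {p p' : Fin (m+1) → F}
    {l : (Fin m → F) × F} (h : IncRel m p l) (h' : IncRel m p' l) (h0 : p 0 = p' 0) :
    p = p' := by
  funext j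
  refine Fin.cases h0 (fun i => ?_) j
  rw [h i, h' i, h0]

lemma common_lines_eq {m : ℕ} (hm : 1 ≤ m) {F : Type} [Field F]
    {p p' : Fin (m+1) → F} {l l' : (Fin m → F) × F}
    (h1 : IncRel m p l) (h2 : IncRel m p' l) (h3 : IncRel m p' l') (h4 : IncRel m p l')
    (hpp : p ≠ p') : l = l' := by
  have h0 : p 0 ≠ p' 0 := fun h => hpp (rel_point_eq h1 h2 h)
  obtain ⟨a, z⟩ := l
  obtain ⟨a', z'⟩ := l'
  have hz : ∀ j : Fin m, z ^ ((j : ℕ) + 1) = z' ^ ((j : ℕ) + 1) := by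
    intro j
    have e1 := h1 j
    have e2 := h2 j
    have e3 := h3 j
    have e4 := h4 j
    have key : (p 0 - p' 0) * z ^ ((j : ℕ) + 1) = (p 0 - p' 0) * z' ^ ((j : ℕ) + 1) := by
      have : p j.succ - p' j.succ = (p 0 - p' 0) * z ^ ((j : ℕ) + 1) := by
        rw [e1, e2]; ring
      have h2' : p j.succ - p' j.succ = (p 0 - p' 0) * z' ^ ((j : ℕ) + 1) := by
        rw [e4, e3]; ring
      rw [← this, h2']
    exact mul_left_cancel₀ (sub_ne_zero.mpr h0) key
  have hzz : z = z' := by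
    have := hz ⟨0, hm⟩
    simpa using this
  have ha : a = a' := by
    funext j
    have e1 := h1 j
    have e4 := h4 j
    simp only at e1 e4
    rw [hzz] at e1
    exact add_right_cancel (e1.symm.trans e4)
  rw [hzz, ha]

lemma adj_lr {m : ℕ} {F : Type} [Field F] {p : Fin (m+1) → F} {l : (Fin m → F) × F} :
    (Gr m F).Adj (.inl p) (.inr l) ↔ IncRel m p l := by
  constructor
  · rintro (⟨p', l', hp, hl, h⟩ | ⟨p', l', hp, hl, h⟩)
    · obtain rfl : p' = p := by injection hp.symm
      obtain rfl : l' = l := by injection hl.symm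
      exact h
    · simp at hp
  · intro h
    exact Or.inl ⟨p, l, rfl, rfl, h⟩

lemma not_adj_ll {m : ℕ} {F : Type} [Field F] {p p' : Fin (m+1) → F} :
    ¬ (Gr m F).Adj (.inl p) (.inl p') := by
  rintro (⟨q, l', hp, hl, h⟩ | ⟨q, l', hp, hl, h⟩) <;> simp_all

lemma not_adj_rr {m : ℕ} {F : Type} [Field F] {l l' : (Fin m → F) × F} :
    ¬ (Gr m F).Adj (.inr l) (.inr l') := by
  rintro (⟨q, l'', hp, hl, h⟩ | ⟨q, l'', hp, hl, h⟩) <;> simp_all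

lemma no_c4_aux {m : ℕ} (hm : 1 ≤ m) {F : Type} [Field F]
    (p : Fin (m+1) → F) {x w y : (Fin (m+1) → F) ⊕ ((Fin m → F) × F)}
    (h1 : (Gr m F).Adj (.inl p) x) (h2 : (Gr m F).Adj x w) (h3 : (Gr m F).Adj w y)
    (h4 : (Gr m F).Adj y (.inl p)) (huw : Sum.inl p ≠ w) (hxy : x ≠ y) : False := by
  obtain (x' | l) := x
  · exact not_adj_ll h1
  obtain (p2 | l') := w
  · obtain (x' | l3) := y
    · exact not_adj_ll (h3.symm)
    have r1 : IncRel m p l := adj_lr.mp h1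
    have r2 : IncRel m p2 l := adj_lr.mp h2.symm
    have r3 : IncRel m p2 l3 := adj_lr.mp h3
    have r4 : IncRel m p l3 := adj_lr.mp h4.symm
    have hpp : p ≠ p2 := fun h => huw (congrArg Sum.inl h)
    have := common_lines_eq hm r1 r2 r3 r4 hpp
    exact hxy (congrArg Sum.inr this)
  · exact not_adj_rr h2

/-- In the incidence graph, any "4-cycle configuration" is impossible. -/
lemma no_c4 {m : ℕ} (hm : 1 ≤ m) {F : Type} [Field F]
    {u x w y : (Fin (m+1) → F) ⊕ ((Fin m → F) × F)}
    (h1 : (Gr m F).Adj u x) (h2 : (Gr m F).Adj x w) (h3 : (Gr m F).Adj w y)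
    (h4 : (Gr m F).Adj y u) (huw : u ≠ w) (hxy : x ≠ y) : False := by
  obtain (p | l) := u
  · exact no_c4_aux hm p h1 h2 h3 h4 huw hxy
  · obtain (p | l') := x
    · exact no_c4_aux hm p h2 h3 h4 h1 hxy (fun h => huw h.symm) -- careful
    · exact not_adj_rr h1

/-- The incidence type: pairs (point, line) with the point on the line. -/
def Inc (m : ℕ) (F : Type) [Field F] : Type :=
  {pl : (Fin (m+1) → F) × ((Fin m → F) × F) // IncRel m pl.1 pl.2}

def incEquiv (m : ℕ) (F : Type) [Field F] :
    Inc m F ≃ ((Fin m → F) × F) × F where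
  toFun x := (x.1.2, x.1.1 0)
  invFun alz :=
    ⟨(Fin.cons alz.2 (fun j => alz.1.1 j + alz.2 * alz.1.2 ^ ((j : ℕ) + 1)), alz.1),
      by intro j; simp [Fin.cons_succ, Fin.cons_zero]⟩
  left_inv := by
    rintro ⟨⟨p, l⟩, h⟩
    refine Subtype.ext (Prod.ext ?_ rfl)
    funext j
    refine Fin.cases ?_ (fun i => ?_) j
    · simp
    · simp only [Fin.cons_succ]
      exact (h i).symm
  right_inv := by rintro ⟨⟨a, z⟩, y⟩; simp

lemma edge_count (m : ℕ) (F : Type) [Field F] [Fintype F] :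
    (Gr m F).edgeSet.ncard = Fintype.card F ^ (m + 2) := by
  classical
  have hbij : ∃ f : Inc m F → (Gr m F).edgeSet, Function.Bijective f := by
    refine ⟨fun x => ⟨s(.inl x.1.1, .inr x.1.2), Or.inl ⟨x.1.1, x.1.2, rfl, rfl, x.2⟩⟩, ?_, ?_⟩
    · rintro ⟨⟨p, l⟩, h⟩ ⟨⟨p', l'⟩, h'⟩ he
      have he' : s(Sum.inl p, Sum.inr l) = s(Sum.inl p', Sum.inr l') :=
        congrArg Subtype.val he
      rw [Sym2.eq_iff] at he'
      rcases he' with ⟨h1, h2⟩ | ⟨h1, h2⟩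
      · obtain rfl : p = p' := by injection h1
        obtain rfl : l = l' := by injection h2
        rfl
      · simp at h1
    · rintro ⟨e, he⟩
      revert he
      refine Sym2.ind (fun u v he => ?_) e
      rw [SimpleGraph.mem_edgeSet] at he
      rcases he with ⟨p, l, rfl, rfl, hr⟩ | ⟨p, l, rfl, rfl, hr⟩
      · exact ⟨⟨(p, l), hr⟩, Subtype.ext rfl⟩
      · exact ⟨⟨(p, l), hr⟩, Subtype.ext (Sym2.eq_swap)⟩
  obtain ⟨f, hf⟩ := hbij
  have h1 : (Gr m F).edgeSet.ncard = Nat.card (Gr m F).edgeSet := rfl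
  rw [h1, ← Nat.card_eq_of_bijective f hf, Nat.card_congr (incEquiv m F)]
  simp [Nat.card_eq_fintype_card, Fintype.card_prod, Fintype.card_fun]
  ring

theorem stmt_19 (k : ℕ) (hk : 2 ≤ k) (F : Type) [Field F] [Fintype F] :
    ∃ (V : Type) (_ : Fintype V) (G : SimpleGraph V),
      Fintype.card V = 2 * Fintype.card F ^ k ∧
      G.edgeSet.ncard = Fintype.card F ^ (k + 1) ∧
      ∀ (v : V) (c : G.Walk v v), c.IsCycle → c.length ≠ 4 := by
  classical
  obtain ⟨m, rfl⟩ : ∃ m, k = m + 1 := ⟨k - 1, by omega⟩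
  have hm : 1 ≤ m := by omega
  refine ⟨(Fin (m+1) → F) ⊕ ((Fin m → F) × F), inferInstance, Gr m F, ?_, ?_, ?_⟩
  · simp [Fintype.card_sum, Fintype.card_prod, Fintype.card_fun]
    ring
  · rw [edge_count m F]
  · intro v c hc hl
    -- destruct the walk of length 4
    cases c with
    | nil => simp at hl
    | cons h1 p =>
      cases p with
      | nil => simp at hl
      | cons h2 p =>
        cases p with
        | nil => simp at hl
        | cons h3 p =>
          cases p with
          | nil => simp at hl
          | cons h4 p =>
            cases p with
            | cons h5 p => simp [SimpleGraph.Walk.length_cons] at hl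
            | nil =>
              have hnodup := hc.2
              simp [SimpleGraph.Walk.support_cons, List.nodup_cons] at hnodup
              -- extract distinctness
              exact no_c4 hm h1 h2 h3 h4 (by tauto) (by tauto)
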